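/- For every 3CNF formula φ = C1 ∧ ⋯ ∧ Cm over Boolean variables x1,…,xn, associate with every xi the 2m capture variables x_i^{j,t} and x_i^{j,f} (1 ≤ j ≤ m), and define the regex formulas γ1 := γ_{x1}·⋯·γ_{xn}·a, where γ_{xi} := (x_i^{1,t}{ε}·⋯·x_i^{m,t}{ε}) ∨ (x_i^{1,f}{ε}·⋯·x_i^{m,f}{ε}), and γ2 := a·δ1·⋯·δm, where δj is the disjunction, over the three literals of Cj, of x_i^{j,t}{ε} if the literal is xi and of x_i^{j,f}{ε} if the literal is ¬xi, and where a ∈ Σ is a fixed letter. Then γ1 and γ2 are sequential regex formulas, and ⟦γ1 ⋈ γ2⟧(d) ≠ ∅ for the one-letter document d = a if and only if φ is satisfiable. -/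

import Mathlib

namespace Spanners

open scoped Classical

/-! ### Spans and mappings -/

abbrev Span := ℕ × ℕ

abbrev VMapping := ℕ → Option Span

def emptyMapping : VMapping := fun _ => none

def mapDom (μ : VMapping) : Set ℕ := {x | μ x ≠ none}

/-- Two mappings are compatible if they agree on every common variable. -/
def Compatible (μ1 μ2 : VMapping) : Prop :=
  ∀ x s1 s2, μ1 x = some s1 → μ2 x = some s2 → s1 = s2

def DisjointDom (μ1 μ2 : VMapping) : Prop :=
  ∀ x, μ1 x = none ∨ μ2 x = none

def munion (μ1 μ2 : VMapping) : VMapping := fun x =>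
  match μ1 x with
  | some s => some s
  | none => μ2 x

def minsert (x : ℕ) (s : Span) (μ : VMapping) : VMapping :=
  fun y => if y = x then some s else μ y

/-- Natural join of two sets of mappings. -/
def joinSet (S1 S2 : Set VMapping) : Set VMapping :=
  {μ | ∃ μ1 ∈ S1, ∃ μ2 ∈ S2, Compatible μ1 μ2 ∧ μ = munion μ1 μ2}

/-- Difference of two sets of mappings. -/
def diffSet (S1 S2 : Set VMapping) : Set VMapping :=
  {μ1 | μ1 ∈ S1 ∧ ∀ μ2 ∈ S2, ¬ Compatible μ1 μ2}

/-- Restriction of a mapping to a set of variables. -/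
noncomputable def restrictMap (μ : VMapping) (V : Set ℕ) : VMapping :=
  fun x => if x ∈ V then μ x else none

/-- Projection of a set of mappings to a set of variables. -/
def projSet (V : Set ℕ) (S : Set VMapping) : Set VMapping :=
  {μ' | ∃ μ ∈ S, μ' = restrictMap μ V}

/-! ### Regex formulas -/

inductive RGX (Sig : Type) where
  | empty : RGX Sig
  | eps : RGX Sig
  | letter : Sig → RGX Sig
  | union : RGX Sig → RGX Sig → RGX Sig
  | concat : RGX Sig → RGX Sig → RGX Sig
  | star : RGX Sig → RGX Sig
  | bind : ℕ → RGX Sig → RGX Sig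

variable {Sig : Type}

def RGX.vars : RGX Sig → Finset ℕ
  | .empty => ∅
  | .eps => ∅
  | .letter _ => ∅
  | .union a b => a.vars ∪ b.vars
  | .concat a b => a.vars ∪ b.vars
  | .star a => a.vars
  | .bind x a => insert x a.vars

def RGX.size : RGX Sig → ℕ
  | .empty => 1
  | .eps => 1
  | .letter _ => 1
  | .union a b => a.size + b.size + 1
  | .concat a b => a.size + b.size + 1
  | .star a => a.size + 1
  | .bind _ a => a.size + 1

/-- The schemaless semantics `⟨α⟩(d)`: `RMatch α d i j μ` means `([i,j⟩, μ) ∈ ⟨α⟩(d)`. -/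
inductive RMatch : RGX Sig → List Sig → ℕ → ℕ → VMapping → Prop where
  | eps {d : List Sig} {i : ℕ} (h1 : 1 ≤ i) (h2 : i ≤ d.length + 1) :
      RMatch .eps d i i emptyMapping
  | letter {d : List Sig} {i : ℕ} {σ : Sig} (h1 : 1 ≤ i) (h2 : d[i - 1]? = some σ) :
      RMatch (.letter σ) d i (i + 1) emptyMapping
  | unionL {a b : RGX Sig} {d : List Sig} {i j : ℕ} {μ : VMapping}
      (h : RMatch a d i j μ) : RMatch (.union a b) d i j μ
  | unionR {a b : RGX Sig} {d : List Sig} {i j : ℕ} {μ : VMapping}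
      (h : RMatch b d i j μ) : RMatch (.union a b) d i j μ
  | concat {a b : RGX Sig} {d : List Sig} {i k j : ℕ} {μ1 μ2 : VMapping}
      (h1 : RMatch a d i k μ1) (h2 : RMatch b d k j μ2) (hd : DisjointDom μ1 μ2) :
      RMatch (.concat a b) d i j (munion μ1 μ2)
  | bind {x : ℕ} {a : RGX Sig} {d : List Sig} {i j : ℕ} {μ : VMapping}
      (h : RMatch a d i j μ) (hx : μ x = none) :
      RMatch (.bind x a) d i j (minsert x (i, j) μ)
  | starNil {a : RGX Sig} {d : List Sig} {i : ℕ} (h1 : 1 ≤ i) (h2 : i ≤ d.length + 1) :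
      RMatch (.star a) d i i emptyMapping
  | starCons {a : RGX Sig} {d : List Sig} {i k j : ℕ} {μ1 μ2 : VMapping}
      (h1 : RMatch a d i k μ1) (h2 : RMatch (.star a) d k j μ2) (hd : DisjointDom μ1 μ2) :
      RMatch (.star a) d i j (munion μ1 μ2)

/-- `⟦α⟧(d)`: mappings extracted with the full span. -/
def rgxSem (α : RGX Sig) (d : List Sig) : Set VMapping :=
  {μ | RMatch α d 1 (d.length + 1) μ}

/-- Sequential regex formulas. -/
def RGX.Sequential : RGX Sig → Prop
  | .empty => True
  | .eps => True
  | .letter _ => True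
  | .union a b => a.Sequential ∧ b.Sequential
  | .concat a b => a.Sequential ∧ b.Sequential ∧ Disjoint a.vars b.vars
  | .star a => a.Sequential ∧ a.vars = ∅
  | .bind x a => a.Sequential ∧ x ∉ a.vars

/-- Variable-free words over the alphabet (built from ε, letters and concatenation). -/
inductive RGX.IsWord : RGX Sig → Prop where
  | eps : RGX.IsWord .eps
  | letter (σ : Sig) : RGX.IsWord (.letter σ)
  | concat {a b : RGX Sig} : a.IsWord → b.IsWord → RGX.IsWord (.concat a b)

/-- Functional for a set `V` of variables. -/
inductive FunctionalFor : RGX Sig → Finset ℕ → Prop where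
  | word {α : RGX Sig} (h : α.IsWord) : FunctionalFor α ∅
  | union {a b : RGX Sig} {V : Finset ℕ} (ha : FunctionalFor a V) (hb : FunctionalFor b V) :
      FunctionalFor (.union a b) V
  | concat {a b : RGX Sig} {V : Finset ℕ} (V1 : Finset ℕ) (hsub : V1 ⊆ V)
      (ha : FunctionalFor a V1) (hb : FunctionalFor b (V \ V1)) :
      FunctionalFor (.concat a b) V
  | star {a : RGX Sig} (h : FunctionalFor a ∅) : FunctionalFor (.star a) ∅
  | bind {x : ℕ} {a : RGX Sig} {V : Finset ℕ} (h : FunctionalFor a (V.erase x)) :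
      FunctionalFor (.bind x a) V

def RGX.Functional (α : RGX Sig) : Prop := FunctionalFor α α.vars

/-- Disjunctive functional regex formulas: finite disjunctions of functional regex formulas. -/
inductive DisjFunctional : RGX Sig → Prop where
  | base {γ : RGX Sig} (h : γ.Functional) : DisjFunctional γ
  | union {a b : RGX Sig} (ha : DisjFunctional a) (hb : DisjFunctional b) :
      DisjFunctional (.union a b)

/-- Number of disjuncts of a (disjunctive) regex formula. -/
def countDisjuncts : RGX Sig → ℕ
  | .union a b => countDisjuncts a + countDisjuncts b
  | _ => 1

/-- Disjunction-free regex formulas. -/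
def RGX.DisjFree : RGX Sig → Prop
  | .union _ _ => False
  | .concat a b => a.DisjFree ∧ b.DisjFree
  | .star a => a.DisjFree
  | .bind _ a => a.DisjFree
  | _ => True

/-- `γ` is synchronized for `x`: no subformula `γ1 ∨ γ2` contains `x`. -/
def RGX.SyncFor : RGX Sig → ℕ → Prop
  | .union a b, x => (x ∉ a.vars ∧ x ∉ b.vars) ∧ a.SyncFor x ∧ b.SyncFor x
  | .concat a b, x => a.SyncFor x ∧ b.SyncFor x
  | .star a, x => a.SyncFor x
  | .bind _ a, x => a.SyncFor x
  | _, _ => True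

/-- Concatenation of a list of regex formulas. -/
def concatList : List (RGX Sig) → RGX Sig
  | [] => .eps
  | [α] => α
  | α :: rest => .concat α (concatList rest)

/-- Disjunction of a list of regex formulas. -/
def disjList : List (RGX Sig) → RGX Sig
  | [] => .empty
  | [α] => α
  | α :: rest => .union α (disjList rest)

/-! ### vset-automata -/

inductive VLabel (Sig : Type) where
  | eps : VLabel Sig
  | letter : Sig → VLabel Sig
  | openv : ℕ → VLabel Sig
  | closev : ℕ → VLabel Sig
deriving DecidableEq

structure VA (Sig : Type) [DecidableEq Sig] where
  q0 : ℕ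
  F : Finset ℕ
  δ : Finset (ℕ × VLabel Sig × ℕ)

variable [DecidableEq Sig]

/-- The states of a VA: the initial state and all states mentioned in `F` or in transitions. -/
def statesOf (A : VA Sig) : Finset ℕ :=
  insert A.q0 (A.F ∪ A.δ.image (fun t => t.1) ∪ A.δ.image (fun t => t.2.2))

def labelVars : VLabel Sig → Finset ℕ
  | .openv x => {x}
  | .closev x => {x}
  | _ => ∅

/-- `Vars(A)`: the variables mentioned in the transitions of `A`. -/
def varsOf (A : VA Sig) : Finset ℕ := A.δ.biUnion (fun t => labelVars t.2.1)

/-- Total size of a VA: number of states plus number of transitions. -/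
def vaSize (A : VA Sig) : ℕ := (statesOf A).card + A.δ.card

/-- `A.PathFrom p ls q`: a path (run segment) from `p` to `q` with label sequence `ls`. -/
inductive VA.PathFrom (A : VA Sig) : ℕ → List (VLabel Sig) → ℕ → Prop where
  | nil (q : ℕ) : VA.PathFrom A q [] q
  | cons {p q r : ℕ} {l : VLabel Sig} {ls : List (VLabel Sig)}
      (h : (p, l, q) ∈ A.δ) (htail : VA.PathFrom A q ls r) : VA.PathFrom A p (l :: ls) r

/-- The word (document) read by a sequence of labels. -/
def readWord : List (VLabel Sig) → List Sig :=
  List.filterMap fun l => match l with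
    | VLabel.letter σ => some σ
    | _ => none

def isLetterL : VLabel Sig → Bool
  | .letter _ => true
  | _ => false

/-- The current position in the document just before executing the `k`-th label. -/
def posAt (ls : List (VLabel Sig)) (k : ℕ) : ℕ := 1 + (ls.take k).countP isLetterL

/-- Validity of a run, given by its label sequence. -/
def ValidLabels (ls : List (VLabel Sig)) : Prop :=
  ∀ x : ℕ,
    ls.count (VLabel.openv x) ≤ 1 ∧
    ls.count (VLabel.closev x) ≤ 1 ∧
    ((VLabel.openv x) ∈ ls ↔ (VLabel.closev x) ∈ ls) ∧
    ∀ i j : ℕ, ls[i]? = some (VLabel.openv x) → ls[j]? = some (VLabel.closev x) →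
      posAt ls i ≤ posAt ls j

/-- The mapping `μ_ρ` extracted from a (valid accepting) run with label sequence `ls`. -/
def runMapping (ls : List (VLabel Sig)) : VMapping := fun x =>
  if (VLabel.openv x) ∈ ls then
    some (posAt ls (ls.idxOf (VLabel.openv x)), posAt ls (ls.idxOf (VLabel.closev x)))
  else none

/-- `ls` is the label sequence of an accepting run of `A`. -/
def AcceptsWith (A : VA Sig) (ls : List (VLabel Sig)) : Prop :=
  ∃ qf, VA.PathFrom A A.q0 ls qf ∧ qf ∈ A.F

/-- `⟦A⟧(d)`. -/
def vaSem (A : VA Sig) (d : List Sig) : Set VMapping :=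
  {μ | ∃ ls, AcceptsWith A ls ∧ readWord ls = d ∧ ValidLabels ls ∧ μ = runMapping ls}

/-- A VA is sequential if all of its accepting runs are valid. -/
def VA.Sequential (A : VA Sig) : Prop := ∀ ls, AcceptsWith A ls → ValidLabels ls

/-- A run from the initial state to `q` that is a prefix of an accepting run. -/
def PrefixRun (A : VA Sig) (ls : List (VLabel Sig)) (q : ℕ) : Prop :=
  VA.PathFrom A A.q0 ls q ∧ ∃ ls' qf, VA.PathFrom A q ls' qf ∧ qf ∈ A.F

/-- `A` is semi-functional for the variable `x`: no state has extended configuration `d`. -/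
def SemiFunctionalFor (A : VA Sig) (x : ℕ) : Prop :=
  ¬ ∃ q ls1 ls2, PrefixRun A ls1 q ∧ PrefixRun A ls2 q ∧
      (VLabel.closev x) ∈ ls1 ∧ (VLabel.openv x) ∉ ls2

def SemiFunctionalForSet (A : VA Sig) (X : Finset ℕ) : Prop :=
  ∀ x ∈ X, SemiFunctionalFor A x

/-- Functional VA: sequential, and every accepting run opens and closes every variable. -/
def FunctionalVA (A : VA Sig) : Prop :=
  A.Sequential ∧ ∀ ls, AcceptsWith A ls → ∀ x ∈ varsOf A,
    (VLabel.openv x) ∈ ls ∧ (VLabel.closev x) ∈ ls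

/-- `l` has a unique target state in `A`. -/
def UniqueTarget (A : VA Sig) (l : VLabel Sig) : Prop :=
  ∃ qt : ℕ, ∀ p q : ℕ, (p, l, q) ∈ A.δ → q = qt

/-- `A` is synchronized for the variable `x`. -/
def SyncForVA (A : VA Sig) (x : ℕ) : Prop :=
  UniqueTarget A (VLabel.openv x) ∧ UniqueTarget A (VLabel.closev x) ∧
    ((∀ ls, AcceptsWith A ls → (VLabel.openv x) ∈ ls ∧ (VLabel.closev x) ∈ ls) ∨
     (∀ ls, AcceptsWith A ls → (VLabel.openv x) ∉ ls ∧ (VLabel.closev x) ∉ ls))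

/-- `A` is the disjunctive functional VA with functional components `parts`. -/
def DisjFunctionalVAWith (A : VA Sig) (parts : List (VA Sig)) : Prop :=
  (∀ B ∈ parts, FunctionalVA B) ∧
  (parts.Pairwise fun B C => Disjoint (statesOf B) (statesOf C)) ∧
  (∀ B ∈ parts, A.q0 ∉ statesOf B) ∧
  A.F = parts.foldr (fun B s => B.F ∪ s) (∅ : Finset ℕ) ∧
  A.δ = (parts.map (fun B => (A.q0, (VLabel.eps : VLabel Sig), B.q0))).toFinset
        ∪ parts.foldr (fun B s => B.δ ∪ s) (∅ : Finset (ℕ × VLabel Sig × ℕ))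

def DisjFunctionalVA (A : VA Sig) : Prop := ∃ parts, DisjFunctionalVAWith A parts

/-! ### 3CNF formulas -/

/-- A 3CNF clause over `n` Boolean variables: a triple of literals; `(i, true)` is `xᵢ`,
`(i, false)` is `¬xᵢ`. -/
def Clause3 (n : ℕ) : Type := (Fin n × Bool) × (Fin n × Bool) × (Fin n × Bool)

def litsOf {n : ℕ} (c : Clause3 n) : List (Fin n × Bool) := [c.1, c.2.1, c.2.2]

def clauseSat {n : ℕ} (τ : Fin n → Bool) (c : Clause3 n) : Prop :=
  ∃ l ∈ litsOf c, τ l.1 = l.2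

def Sat3 {n m : ℕ} (φ : Fin m → Clause3 n) : Prop :=
  ∃ τ : Fin n → Bool, ∀ j, clauseSat τ (φ j)

end Spanners

namespace Spanners

variable {Sig : Type}

/-- The capture variable `x_i^{j,b}`, encoded injectively as a natural number. -/
def encVar0 (m i j : ℕ) (b : Bool) : ℕ := 2 * (i * m + j) + b.toNat

/-- `γ_{x_i} = (x_i^{1,t}{ε}⋯x_i^{m,t}{ε}) ∨ (x_i^{1,f}{ε}⋯x_i^{m,f}{ε})`. -/
def gammaVar0 (n m : ℕ) (i : Fin n) : RGX Sig :=
  .union (concatList (List.ofFn fun j : Fin m => .bind (encVar0 m i j true) .eps))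
         (concatList (List.ofFn fun j : Fin m => .bind (encVar0 m i j false) .eps))

/-- `γ1 = γ_{x1}·⋯·γ_{xn}·a`. -/
def gamma1S0 (a : Sig) (n m : ℕ) : RGX Sig :=
  concatList ((List.ofFn fun i : Fin n => gammaVar0 n m i) ++ [.letter a])

/-- `δ_j`: the disjunction over the three literals of clause `C_j`. -/
def deltaS0 {n m : ℕ} (φ : Fin m → Clause3 n) (j : Fin m) : RGX Sig :=
  disjList ((litsOf (φ j)).map fun l => .bind (encVar0 m l.1 j l.2) .eps)

/-- `γ2 = a·δ1·⋯·δm`. -/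
def gamma2S0 (a : Sig) {n m : ℕ} (φ : Fin m → Clause3 n) : RGX Sig :=
  concatList (.letter a :: List.ofFn fun j : Fin m => deltaS0 φ j)

section Aux
open scoped Classical

variable {Sig : Type}

/-! ### basic mapping lemmas -/

lemma munion_empty_left (μ : VMapping) : munion emptyMapping μ = μ := rfl

lemma munion_empty_right (μ : VMapping) : munion μ emptyMapping = μ := by
  funext x; cases h : μ x <;> simp [munion, h, emptyMapping]

def listMap (xs : List ℕ) (s : Span) : VMapping :=
  fun y => if y ∈ xs then some s else none

lemma listMap_nil (s : Span) : listMap [] s = emptyMapping := by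
  funext x; simp [listMap, emptyMapping]

/-! ### encVar0 injectivity -/

lemma encVar0_inj {m i i' j j' : ℕ} {b b' : Bool} (hj : j < m) (hj' : j' < m)
    (h : encVar0 m i j b = encVar0 m i' j' b') : i = i' ∧ j = j' ∧ b = b' := by
  unfold encVar0 at h
  have hb : b.toNat = b'.toNat ∧ i * m + j = i' * m + j' := by
    cases b <;> cases b' <;> simp [Bool.toNat] at h ⊢ <;> omega
  have hbb : b = b' := by cases b <;> cases b' <;> simp [Bool.toNat] at hb ⊢ <;> omega
  have hsum := hb.2
  have hii : i = i' := by
    by_contra hne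
    rcases Nat.lt_or_ge i i' with hlt | hge
    · have h1 : i * m + j < i' * m + j' := by
        calc i * m + j < i * m + m := by omega
        _ = (i + 1) * m := by ring
        _ ≤ i' * m := Nat.mul_le_mul_right m hlt
        _ ≤ i' * m + j' := Nat.le_add_right _ _
      omega
    · have hlt : i' < i := lt_of_le_of_ne hge (fun hh => hne hh.symm)
      have h1 : i' * m + j' < i * m + j := by
        calc i' * m + j' < i' * m + m := by omega
        _ = (i' + 1) * m := by ring
        _ ≤ i * m := Nat.mul_le_mul_right m hlt
        _ ≤ i * m + j := Nat.le_add_right _ _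
      omega
  refine ⟨hii, ?_, hbb⟩
  subst hii; omega

/-! ### bounds -/

lemma RMatch.bounds {α : RGX Sig} {d : List Sig} {i j : ℕ} {μ : VMapping}
    (h : RMatch α d i j μ) : 1 ≤ i ∧ i ≤ j ∧ j ≤ d.length + 1 := by
  induction h with
  | eps h1 h2 => exact ⟨h1, le_refl _, h2⟩
  | letter h1 h2 =>
      have := (List.getElem?_eq_some_iff.mp h2).1
      omega
  | unionL h ih => exact ih
  | unionR h ih => exact ih
  | concat h1 h2 hd ih1 ih2 => exact ⟨ih1.1, le_trans ih1.2.1 ih2.2.1, ih2.2.2⟩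
  | bind h hx ih => exact ih
  | starNil h1 h2 => exact ⟨h1, le_refl _, h2⟩
  | starCons h1 h2 hd ih1 ih2 => exact ⟨ih1.1, le_trans ih1.2.1 ih2.2.1, ih2.2.2⟩

/-! ### concatList structural lemmas -/

lemma concatList_cons_elim {α : RGX Sig} {L : List (RGX Sig)} {d : List Sig}
    {i j : ℕ} {μ : VMapping} (h : RMatch (concatList (α :: L)) d i j μ) :
    ∃ k μ1 μ2, RMatch α d i k μ1 ∧ RMatch (concatList L) d k j μ2 ∧
      DisjointDom μ1 μ2 ∧ μ = munion μ1 μ2 := by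
  cases L with
  | nil =>
      have hb := h.bounds
      refine ⟨j, μ, emptyMapping, h, ?_, fun x => Or.inr rfl, (munion_empty_right μ).symm⟩
      exact RMatch.eps (le_trans hb.1 hb.2.1) hb.2.2
  | cons β L' =>
      cases h with
      | concat h1 h2 hd => exact ⟨_, _, _, h1, h2, hd, rfl⟩

lemma concatList_cons_intro {α : RGX Sig} {L : List (RGX Sig)} {d : List Sig}
    {i k j : ℕ} {μ1 μ2 : VMapping} (h1 : RMatch α d i k μ1)
    (h2 : RMatch (concatList L) d k j μ2) (hd : DisjointDom μ1 μ2) :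
    RMatch (concatList (α :: L)) d i j (munion μ1 μ2) := by
  cases L with
  | nil =>
      have h2' : RMatch (.eps) d k j μ2 := h2
      cases h2' with
      | eps _ _ => rw [show concatList [α] = α from rfl, munion_empty_right]; exact h1
  | cons β L' => exact RMatch.concat h1 h2 hd

/-! ### bind-chain lemmas -/

lemma bind_eps_elim {x : ℕ} {d : List Sig} {p q : ℕ} {μ : VMapping}
    (h : RMatch (.bind x .eps) d p q μ) :
    p = q ∧ μ = minsert x (p, p) emptyMapping := by
  cases h with
  | bind h hx => cases h with | eps h1 h2 => exact ⟨rfl, rfl⟩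

lemma bindChain_elim {xs : List ℕ} {d : List Sig} {p q : ℕ} {μ : VMapping}
    (h : RMatch (concatList (xs.map fun x => RGX.bind x .eps)) d p q μ) :
    p = q ∧ μ = listMap xs (p, p) := by
  induction xs generalizing p μ with
  | nil =>
      simp only [List.map_nil] at h
      cases h with
      | eps h1 h2 => exact ⟨rfl, (listMap_nil _).symm⟩
  | cons x xs ih =>
      simp only [List.map_cons] at h
      obtain ⟨k, μ1, μ2, h1, h2, hd, hμ⟩ := concatList_cons_elim h
      obtain ⟨rfl, rfl⟩ := bind_eps_elim h1
      obtain ⟨rfl, rfl⟩ := ih h2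
      refine ⟨rfl, ?_⟩
      subst hμ
      funext y
      by_cases hy : y = x <;>
        simp [munion, minsert, listMap, emptyMapping, hy]

lemma bindChain_intro {xs : List ℕ} (hnd : xs.Nodup) {d : List Sig} {p : ℕ}
    (h1 : 1 ≤ p) (h2 : p ≤ d.length + 1) :
    RMatch (concatList (xs.map fun x => RGX.bind x .eps)) d p p (listMap xs (p, p)) := by
  induction xs with
  | nil =>
      rw [List.map_nil, show concatList ([] : List (RGX Sig)) = .eps from rfl, listMap_nil]
      exact RMatch.eps h1 h2
  | cons x xs ih =>
      have hnd' := hnd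
      rw [List.nodup_cons] at hnd'
      have hbind : RMatch (RGX.bind x (.eps : RGX Sig)) d p p (minsert x (p, p) emptyMapping) :=
        RMatch.bind (RMatch.eps h1 h2) rfl
      have hrest := ih hnd'.2
      have hdis : DisjointDom (minsert x (p, p) emptyMapping) (listMap xs (p, p)) := by
        intro y
        by_cases hy : y = x
        · right; subst hy; simp [listMap, hnd'.1]
        · left; simp [minsert, emptyMapping, hy]
      have := concatList_cons_intro hbind hrest hdis
      rw [List.map_cons]
      convert this using 1
      funext y
      by_cases hy : y = x <;> simp [munion, minsert, listMap, emptyMapping, hy]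

/-! ### gammaVar lemmas -/

lemma ofFn_bind_eq (m i : ℕ) (c : Bool) :
    (List.ofFn fun j : Fin m => (RGX.bind (encVar0 m i j c) .eps : RGX Sig)) =
      (List.ofFn fun j : Fin m => encVar0 m i j c).map (fun x => RGX.bind x .eps) := by
  rw [List.map_ofFn]; rfl

lemma gammaVar0_elim {n m : ℕ} {i : Fin n} {d : List Sig} {p q : ℕ} {μ : VMapping}
    (h : RMatch (gammaVar0 n m i) d p q μ) :
    p = q ∧ ∃ c : Bool, μ = listMap (List.ofFn fun j : Fin m => encVar0 m i j c) (p, p) := by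
  unfold gammaVar0 at h
  cases h with
  | unionL h =>
      rw [ofFn_bind_eq] at h
      obtain ⟨hpq, hμ⟩ := bindChain_elim h
      exact ⟨hpq, true, hμ⟩
  | unionR h =>
      rw [ofFn_bind_eq] at h
      obtain ⟨hpq, hμ⟩ := bindChain_elim h
      exact ⟨hpq, false, hμ⟩

lemma encVar0_nodup (n m : ℕ) (i : Fin n) (c : Bool) :
    (List.ofFn fun j : Fin m => encVar0 m (i : ℕ) j c).Nodup := by
  rw [List.nodup_ofFn]
  intro j j' hjj
  have := encVar0_inj j.2 j'.2 hjj
  exact Fin.ext this.2.1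

lemma gammaVar0_intro {n m : ℕ} (i : Fin n) (c : Bool) {d : List Sig} {p : ℕ}
    (h1 : 1 ≤ p) (h2 : p ≤ d.length + 1) :
    RMatch (gammaVar0 n m i) d p p
      (listMap (List.ofFn fun j : Fin m => encVar0 m i j c) (p, p)) := by
  unfold gammaVar0
  cases c with
  | true =>
      apply RMatch.unionL
      rw [ofFn_bind_eq]
      exact bindChain_intro (encVar0_nodup n m i true) h1 h2
  | false =>
      apply RMatch.unionR
      rw [ofFn_bind_eq]
      exact bindChain_intro (encVar0_nodup n m i false) h1 h2

end Aux
section Aux2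
open scoped Classical

variable {Sig : Type}

/-! ### γ1 chain -/

noncomputable def mu1Map (n m : ℕ) (b : Fin n → Bool) (I : List (Fin n)) : VMapping :=
  fun x => if ∃ i ∈ I, ∃ j : Fin m, x = encVar0 m i j (b i) then some (1, 1) else none

lemma g1_elim {n m : ℕ} (a : Sig) (d : List Sig) :
    ∀ (I : List (Fin n)) (p q : ℕ) (μ : VMapping),
      RMatch (concatList ((I.map fun i => gammaVar0 n m i) ++ [RGX.letter a])) d p q μ →
      q = p + 1 ∧ ∃ b : Fin n → Bool, ∀ i ∈ I, ∀ j : Fin m,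
        μ (encVar0 m i j (b i)) = some (p, p) := by
  intro I
  induction I with
  | nil =>
      intro p q μ h
      simp only [List.map_nil, List.nil_append] at h
      have h' : RMatch (RGX.letter a) d p q μ := h
      cases h' with
      | letter h1 h2 => exact ⟨rfl, fun _ => true, by simp⟩
  | cons i I ih =>
      intro p q μ h
      simp only [List.map_cons, List.cons_append] at h
      obtain ⟨k, μ1, μ2, h1, h2, hd, hμ⟩ := concatList_cons_elim h
      obtain ⟨rfl, c, hμ1⟩ := gammaVar0_elim h1
      obtain ⟨hq, b', hb'⟩ := ih p q μ2 h2
      refine ⟨hq, Function.update b' i c, ?_⟩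
      intro i' hi' j
      by_cases hii : i' = i
      · subst hii
        rw [Function.update_self]
        have hmem : encVar0 m (i' : ℕ) j c ∈ (List.ofFn fun j : Fin m => encVar0 m (i' : ℕ) j c) := by
          rw [List.mem_ofFn]; exact ⟨j, rfl⟩
        subst hμ
        simp [munion, hμ1, listMap, hmem]
      · rw [Function.update_of_ne hii]
        have hi'' : i' ∈ I := by
          rcases List.mem_cons.mp hi' with h' | h'
          · exact absurd h' hii
          · exact h'
        have hv2 := hb' i' hi'' j
        have hv1 : μ1 (encVar0 m i' j (b' i')) = none := by
          rcases hd (encVar0 m i' j (b' i')) with h' | h'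
          · exact h'
          · rw [hv2] at h'; cases h'
        subst hμ
        simp [munion, hv1, hv2]

lemma mu1Map_nil (n m : ℕ) (b : Fin n → Bool) : mu1Map n m b [] = emptyMapping := by
  funext x; simp [mu1Map, emptyMapping]

lemma g1_intro {n m : ℕ} (a : Sig) (b : Fin n → Bool) :
    ∀ (I : List (Fin n)), I.Nodup →
      RMatch (concatList ((I.map fun i => gammaVar0 n m i) ++ [RGX.letter a])) [a] 1 2
        (mu1Map n m b I) := by
  intro I
  induction I with
  | nil =>
      intro _
      rw [mu1Map_nil]
      simp only [List.map_nil, List.nil_append]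
      exact RMatch.letter (le_refl 1) (by simp)
  | cons i I ih =>
      intro hnd
      rw [List.nodup_cons] at hnd
      have hgv : RMatch (gammaVar0 n m i) [a] 1 1
          (listMap (List.ofFn fun j : Fin m => encVar0 m i j (b i)) (1, 1)) :=
        gammaVar0_intro i (b i) (le_refl 1) (by simp)
      have hrest := ih hnd.2
      have hdis : DisjointDom (listMap (List.ofFn fun j : Fin m => encVar0 m i j (b i)) (1, 1))
          (mu1Map n m b I) := by
        intro x
        by_cases hx : x ∈ List.ofFn fun j : Fin m => encVar0 m (i : ℕ) j (b i)
        · right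
          rw [List.mem_ofFn] at hx
          obtain ⟨j, rfl⟩ := hx
          show mu1Map n m b I (encVar0 m (i : ℕ) j (b i)) = none
          simp only [mu1Map]
          rw [if_neg]
          rintro ⟨i', hi', j', hx'⟩
          obtain ⟨hii, -, -⟩ := encVar0_inj j.2 j'.2 hx'
          have hfin : (i : Fin n) = i' := Fin.ext hii
          rw [← hfin] at hi'
          exact hnd.1 hi' 
        · left; simp [listMap, hx]
      have := concatList_cons_intro hgv hrest hdis
      simp only [List.map_cons, List.cons_append]
      convert this using 1
      funext x
      by_cases hx : x ∈ List.ofFn fun j : Fin m => encVar0 m (i : ℕ) j (b i)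
      · rw [List.mem_ofFn] at hx
        obtain ⟨j, rfl⟩ := hx
        have hmem : encVar0 m (i : ℕ) j (b i) ∈ List.ofFn fun j : Fin m => encVar0 m (i : ℕ) j (b i) := by
          rw [List.mem_ofFn]; exact ⟨j, rfl⟩
        have hc : ∃ i' ∈ i :: I, ∃ j' : Fin m, encVar0 m (i : ℕ) j (b i) = encVar0 m (i' : ℕ) j' (b i') :=
          ⟨i, List.mem_cons_self, j, rfl⟩
        have e1 : listMap (List.ofFn fun j : Fin m => encVar0 m (i : ℕ) j (b i)) (1,1)
            (encVar0 m (i : ℕ) j (b i)) = some (1,1) := by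
          simp only [listMap, if_pos hmem]
        have e2 : munion (listMap (List.ofFn fun j : Fin m => encVar0 m (i : ℕ) j (b i)) (1,1))
            (mu1Map n m b I) (encVar0 m (i : ℕ) j (b i)) = some (1,1) := by
          simp only [munion, e1]
        rw [e2]
        simp only [mu1Map]
        rw [if_pos hc]
      · have h1 : listMap (List.ofFn fun j : Fin m => encVar0 m (i : ℕ) j (b i)) (1,1) x = none := by
          simp [listMap, hx]
        have h2 : munion (listMap (List.ofFn fun j : Fin m => encVar0 m (i : ℕ) j (b i)) (1,1))
            (mu1Map n m b I) x = mu1Map n m b I x := by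
          simp only [munion, h1]
        rw [h2]
        have hiff : (∃ i' ∈ i :: I, ∃ j' : Fin m, x = encVar0 m (i' : ℕ) j' (b i')) ↔
            (∃ i' ∈ I, ∃ j' : Fin m, x = encVar0 m (i' : ℕ) j' (b i')) := by
          constructor
          · rintro ⟨i', hi', j', hx'⟩
            rcases List.mem_cons.mp hi' with rfl | hmem
            · exfalso; apply hx; rw [hx', List.mem_ofFn]; exact ⟨j', rfl⟩
            · exact ⟨i', hmem, j', hx'⟩
          · rintro ⟨i', hi', j', hx'⟩
            exact ⟨i', List.mem_cons_of_mem _ hi', j', hx'⟩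
        simp only [mu1Map]
        exact if_congr hiff rfl rfl

end Aux2
section Aux3
open scoped Classical

variable {Sig : Type}

/-! ### δ / γ2 lemmas -/

lemma disjBind_elim {xs : List ℕ} {d : List Sig} {p q : ℕ} {μ : VMapping}
    (h : RMatch (disjList (xs.map fun x => RGX.bind x .eps)) d p q μ) :
    p = q ∧ ∃ x ∈ xs, μ = minsert x (p, p) emptyMapping := by
  induction xs generalizing p q μ with
  | nil => simp only [List.map_nil] at h; cases h
  | cons x xs ih =>
      cases xs with
      | nil =>
          simp only [List.map_cons, List.map_nil] at h
          obtain ⟨rfl, hμ⟩ := bind_eps_elim h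
          exact ⟨rfl, x, List.mem_singleton_self x, hμ⟩
      | cons y ys =>
          simp only [List.map_cons] at h
          have h' : RMatch (RGX.union (RGX.bind x .eps)
              (disjList ((y :: ys).map fun x => RGX.bind x .eps))) d p q μ := by
            exact h
          cases h' with
          | unionL h1 =>
              obtain ⟨rfl, hμ⟩ := bind_eps_elim h1
              exact ⟨rfl, x, List.mem_cons_self, hμ⟩
          | unionR h2 =>
              obtain ⟨rfl, z, hz, hμ⟩ := ih h2
              exact ⟨rfl, z, List.mem_cons_of_mem _ hz, hμ⟩

lemma disjBind_intro {xs : List ℕ} {x : ℕ} (hx : x ∈ xs) {d : List Sig} {p : ℕ}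
    (h1 : 1 ≤ p) (h2 : p ≤ d.length + 1) :
    RMatch (disjList (xs.map fun x => RGX.bind x .eps)) d p p
      (minsert x (p, p) emptyMapping) := by
  induction xs with
  | nil => cases hx
  | cons y ys ih =>
      have hbind : ∀ z : ℕ, RMatch (RGX.bind z (.eps : RGX Sig)) d p p
          (minsert z (p, p) emptyMapping) :=
        fun z => RMatch.bind (RMatch.eps h1 h2) rfl
      cases ys with
      | nil =>
          rw [List.mem_singleton] at hx
          subst hx
          exact hbind x
      | cons w ws =>
          rcases List.mem_cons.mp hx with rfl | hmem
          · exact RMatch.unionL (hbind x)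
          · exact RMatch.unionR (ih hmem)

lemma deltaS0_elim {n m : ℕ} {φ : Fin m → Clause3 n} {j : Fin m}
    {d : List Sig} {p q : ℕ} {μ : VMapping}
    (h : RMatch (deltaS0 φ j : RGX Sig) d p q μ) :
    p = q ∧ ∃ l ∈ litsOf (φ j), μ = minsert (encVar0 m l.1 j l.2) (p, p) emptyMapping := by
  unfold deltaS0 at h
  rw [show ((litsOf (φ j)).map fun l => (RGX.bind (encVar0 m l.1 j l.2) .eps : RGX Sig)) =
        (((litsOf (φ j)).map fun l => encVar0 m l.1 j l.2).map fun x => RGX.bind x .eps) by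
      rw [List.map_map]; rfl] at h
  obtain ⟨rfl, x, hx, hμ⟩ := disjBind_elim h
  rw [List.mem_map] at hx
  obtain ⟨l, hl, rfl⟩ := hx
  exact ⟨rfl, l, hl, hμ⟩

lemma deltaS0_intro {n m : ℕ} {φ : Fin m → Clause3 n} {j : Fin m}
    {l : Fin n × Bool} (hl : l ∈ litsOf (φ j)) {d : List Sig} {p : ℕ}
    (h1 : 1 ≤ p) (h2 : p ≤ d.length + 1) :
    RMatch (deltaS0 φ j : RGX Sig) d p p
      (minsert (encVar0 m l.1 j l.2) (p, p) emptyMapping) := by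
  unfold deltaS0
  rw [show ((litsOf (φ j)).map fun l => (RGX.bind (encVar0 m l.1 j l.2) .eps : RGX Sig)) =
        (((litsOf (φ j)).map fun l => encVar0 m l.1 j l.2).map fun x => RGX.bind x .eps) by
      rw [List.map_map]; rfl]
  exact disjBind_intro (List.mem_map.mpr ⟨l, hl, rfl⟩) h1 h2

noncomputable def mu2Map (n m : ℕ) (w : Fin m → Fin n × Bool) (J : List (Fin m)) : VMapping :=
  fun x => if ∃ j ∈ J, x = encVar0 m (w j).1 j (w j).2 then some (2, 2) else none

lemma mu2Map_nil (n m : ℕ) (w : Fin m → Fin n × Bool) : mu2Map n m w [] = emptyMapping := by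
  funext x; simp [mu2Map, emptyMapping]

lemma g2_elim {n m : ℕ} {φ : Fin m → Clause3 n} (d : List Sig) :
    ∀ (J : List (Fin m)) (p q : ℕ) (μ : VMapping),
      RMatch (concatList (J.map fun j => (deltaS0 φ j : RGX Sig))) d p q μ →
      p = q ∧ ∀ j ∈ J, ∃ l ∈ litsOf (φ j), μ (encVar0 m l.1 j l.2) = some (p, p) := by
  intro J
  induction J with
  | nil =>
      intro p q μ h
      simp only [List.map_nil] at h
      cases h with
      | eps _ _ => exact ⟨rfl, by simp⟩
  | cons j J ih =>
      intro p q μ h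
      simp only [List.map_cons] at h
      obtain ⟨k, μ1, μ2, h1, h2, hd, hμ⟩ := concatList_cons_elim h
      obtain ⟨rfl, l, hl, hμ1⟩ := deltaS0_elim h1
      obtain ⟨rfl, hrest⟩ := ih p q μ2 h2
      refine ⟨rfl, ?_⟩
      intro j' hj'
      rcases List.mem_cons.mp hj' with rfl | hmem
      · refine ⟨l, hl, ?_⟩
        subst hμ
        simp [munion, hμ1, minsert]
      · obtain ⟨l', hl', hv2⟩ := hrest j' hmem
        refine ⟨l', hl', ?_⟩
        have hv1 : μ1 (encVar0 m l'.1 j' l'.2) = none := by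
          rcases hd (encVar0 m l'.1 j' l'.2) with h' | h'
          · exact h'
          · rw [hv2] at h'; cases h'
        subst hμ
        simp [munion, hv1, hv2]

lemma g2_intro {n m : ℕ} {φ : Fin m → Clause3 n} (a : Sig) (w : Fin m → Fin n × Bool)
    (hw : ∀ j : Fin m, w j ∈ litsOf (φ j)) :
    ∀ (J : List (Fin m)), J.Nodup →
      RMatch (concatList (J.map fun j => (deltaS0 φ j : RGX Sig))) [a] 2 2
        (mu2Map n m w J) := by
  intro J
  induction J with
  | nil =>
      intro _
      rw [mu2Map_nil]
      simp only [List.map_nil]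
      exact RMatch.eps (by norm_num) (by simp)
  | cons j J ih =>
      intro hnd
      rw [List.nodup_cons] at hnd
      have hδ : RMatch (deltaS0 φ j : RGX Sig) [a] 2 2
          (minsert (encVar0 m (w j).1 j (w j).2) (2, 2) emptyMapping) :=
        deltaS0_intro (hw j) (by norm_num) (by simp)
      have hrest := ih hnd.2
      have hdis : DisjointDom (minsert (encVar0 m (w j).1 j (w j).2) (2, 2) emptyMapping)
          (mu2Map n m w J) := by
        intro x
        by_cases hx : x = encVar0 m (w j).1 j (w j).2
        · right
          subst hx
          simp only [mu2Map]
          rw [if_neg]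
          rintro ⟨j', hj', hx'⟩
          obtain ⟨-, hjj, -⟩ := encVar0_inj j.2 j'.2 hx'
          have hfin : (j : Fin m) = j' := Fin.ext hjj
          rw [← hfin] at hj'
          exact hnd.1 hj' 
        · left; simp [minsert, emptyMapping, hx]
      have := concatList_cons_intro hδ hrest hdis
      simp only [List.map_cons]
      convert this using 1
      funext x
      by_cases hx : x = encVar0 m (w j).1 j (w j).2
      · subst hx
        have hc : ∃ j' ∈ j :: J, encVar0 m ((w j).1 : ℕ) j (w j).2 =
            encVar0 m ((w j').1 : ℕ) j' (w j').2 := ⟨j, List.mem_cons_self, rfl⟩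
        have e1 : minsert (encVar0 m (w j).1 j (w j).2) (2, 2) emptyMapping
            (encVar0 m (w j).1 j (w j).2) = some (2,2) := by
          simp [minsert]
        have e2 : munion (minsert (encVar0 m (w j).1 j (w j).2) (2, 2) emptyMapping)
            (mu2Map n m w J) (encVar0 m (w j).1 j (w j).2) = some (2,2) := by
          simp only [munion, e1]
        rw [e2]
        simp only [mu2Map]
        rw [if_pos hc]
      · have h1 : minsert (encVar0 m (w j).1 j (w j).2) (2, 2) emptyMapping x = none := by
          simp [minsert, emptyMapping, hx]
        have h2 : munion (minsert (encVar0 m (w j).1 j (w j).2) (2, 2) emptyMapping)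
            (mu2Map n m w J) x = mu2Map n m w J x := by
          simp only [munion, h1]
        rw [h2]
        have hiff : (∃ j' ∈ j :: J, x = encVar0 m ((w j').1 : ℕ) j' (w j').2) ↔
            (∃ j' ∈ J, x = encVar0 m ((w j').1 : ℕ) j' (w j').2) := by
          constructor
          · rintro ⟨j', hj', hx'⟩
            rcases List.mem_cons.mp hj' with rfl | hmem
            · exact absurd hx' hx
            · exact ⟨j', hmem, hx'⟩
          · rintro ⟨j', hj', hx'⟩
            exact ⟨j', List.mem_cons_of_mem _ hj', hx'⟩
        simp only [mu2Map]
        exact if_congr hiff rfl rfl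

end Aux3
section Aux4
open scoped Classical

variable {Sig : Type}

/-! ### Sequentiality -/

lemma bind_eps_seq (x : ℕ) : (RGX.bind x (.eps : RGX Sig)).Sequential := by
  constructor
  · trivial
  · simp [RGX.vars]

lemma seq_bindChain (xs : List ℕ) (hnd : xs.Nodup) :
    (concatList (xs.map fun x => (RGX.bind x .eps : RGX Sig))).Sequential ∧
    ∀ y ∈ (concatList (xs.map fun x => (RGX.bind x .eps : RGX Sig))).vars, y ∈ xs := by
  induction xs with
  | nil => exact ⟨trivial, by simp [concatList, RGX.vars]⟩
  | cons x xs ih =>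
      rw [List.nodup_cons] at hnd
      obtain ⟨ihseq, ihvars⟩ := ih hnd.2
      cases xs with
      | nil =>
          refine ⟨bind_eps_seq x, ?_⟩
          intro y hy
          simp only [List.map_cons, List.map_nil, concatList, RGX.vars] at hy
          simp at hy
          simp [hy]
      | cons z zs =>
          simp only [List.map_cons] at *
          refine ⟨⟨bind_eps_seq x, ihseq, ?_⟩, ?_⟩
          · rw [Finset.disjoint_left]
            intro y hy hy'
            have hy1 : y = x := by
              simp [RGX.vars] at hy; exact hy
            have := ihvars y hy'
            rw [hy1] at this
            exact hnd.1 this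
          · intro y hy
            change y ∈ (RGX.bind x .eps : RGX Sig).vars ∪ _ at hy; rw [Finset.mem_union] at hy
            rcases hy with hy | hy
            · simp [RGX.vars] at hy; simp [hy]
            · exact List.mem_cons_of_mem _ (ihvars y hy)

lemma seq_gammaVar {n m : ℕ} (i : Fin n) :
    (gammaVar0 n m i : RGX Sig).Sequential ∧
    ∀ y ∈ (gammaVar0 n m i : RGX Sig).vars, ∃ j : Fin m, ∃ c : Bool, y = encVar0 m i j c := by
  unfold gammaVar0
  have ht := seq_bindChain (Sig := Sig) (List.ofFn fun j : Fin m => encVar0 m (i:ℕ) j true)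
    (encVar0_nodup n m i true)
  have hf := seq_bindChain (Sig := Sig) (List.ofFn fun j : Fin m => encVar0 m (i:ℕ) j false)
    (encVar0_nodup n m i false)
  rw [← ofFn_bind_eq] at ht hf
  refine ⟨⟨ht.1, hf.1⟩, ?_⟩
  intro y hy
  simp only [RGX.vars, Finset.mem_union] at hy
  rcases hy with hy | hy
  · obtain hmem := ht.2 y hy
    rw [List.mem_ofFn] at hmem
    obtain ⟨j, hj⟩ := hmem
    exact ⟨j, true, hj.symm⟩
  · obtain hmem := hf.2 y hy
    rw [List.mem_ofFn] at hmem
    obtain ⟨j, hj⟩ := hmem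
    exact ⟨j, false, hj.symm⟩

lemma seq_g1chain {n m : ℕ} (a : Sig) :
    ∀ (I : List (Fin n)), I.Nodup →
      (concatList ((I.map fun i => gammaVar0 n m i) ++ [(RGX.letter a : RGX Sig)])).Sequential ∧
      ∀ y ∈ (concatList ((I.map fun i => gammaVar0 n m i) ++ [(RGX.letter a : RGX Sig)])).vars,
        ∃ i ∈ I, ∃ j : Fin m, ∃ c : Bool, y = encVar0 m i j c := by
  intro I
  induction I with
  | nil =>
      intro _
      simp only [List.map_nil, List.nil_append]
      exact ⟨trivial, by simp [concatList, RGX.vars]⟩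
  | cons i I ih =>
      intro hnd
      rw [List.nodup_cons] at hnd
      obtain ⟨ihseq, ihvars⟩ := ih hnd.2
      simp only [List.map_cons, List.cons_append] at *
      have hne : (I.map fun i => gammaVar0 n m i) ++ [(RGX.letter a : RGX Sig)] =
          ((I.map fun i => gammaVar0 n m i) ++ [(RGX.letter a : RGX Sig)]) := rfl
      have hcl : concatList ((gammaVar0 n m i : RGX Sig) ::
            ((I.map fun i => gammaVar0 n m i) ++ [(RGX.letter a : RGX Sig)])) =
          RGX.concat (gammaVar0 n m i)
            (concatList ((I.map fun i => gammaVar0 n m i) ++ [(RGX.letter a : RGX Sig)])) := by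
        cases I <;> rfl
      rw [hcl]
      refine ⟨⟨(seq_gammaVar i).1, ihseq, ?_⟩, ?_⟩
      · rw [Finset.disjoint_left]
        intro y hy hy'
        obtain ⟨j, c, rfl⟩ := (seq_gammaVar i).2 y hy
        obtain ⟨i', hi', j', c', hx'⟩ := ihvars _ hy'
        obtain ⟨hii, -, -⟩ := encVar0_inj j.2 j'.2 hx'
        have hfin : (i : Fin n) = i' := Fin.ext hii
        rw [← hfin] at hi'
        exact hnd.1 hi' 
      · intro y hy
        rcases Finset.mem_union.mp hy with hy | hy
        · obtain ⟨j, c, rfl⟩ := (seq_gammaVar i).2 y hy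
          exact ⟨i, List.mem_cons_self, j, c, rfl⟩
        · obtain ⟨i', hi', j', c', hx'⟩ := ihvars _ hy
          exact ⟨i', List.mem_cons_of_mem _ hi', j', c', hx'⟩

lemma seq_disjBind (xs : List ℕ) :
    (disjList (xs.map fun x => (RGX.bind x .eps : RGX Sig))).Sequential ∧
    ∀ y ∈ (disjList (xs.map fun x => (RGX.bind x .eps : RGX Sig))).vars, y ∈ xs := by
  induction xs with
  | nil => exact ⟨trivial, by simp [disjList, RGX.vars]⟩
  | cons x xs ih =>
      cases xs with
      | nil =>
          refine ⟨bind_eps_seq x, ?_⟩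
          intro y hy
          simp only [List.map_cons, List.map_nil, disjList, RGX.vars] at hy
          simp at hy
          simp [hy]
      | cons z zs =>
          simp only [List.map_cons] at *
          refine ⟨⟨bind_eps_seq x, ih.1⟩, ?_⟩
          intro y hy
          change y ∈ (RGX.bind x .eps : RGX Sig).vars ∪ _ at hy; rw [Finset.mem_union] at hy
          rcases hy with hy | hy
          · simp [RGX.vars] at hy; simp [hy]
          · exact List.mem_cons_of_mem _ (ih.2 y hy)

lemma seq_delta {n m : ℕ} {φ : Fin m → Clause3 n} (j : Fin m) :
    (deltaS0 φ j : RGX Sig).Sequential ∧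
    ∀ y ∈ (deltaS0 φ j : RGX Sig).vars, ∃ l ∈ litsOf (φ j), y = encVar0 m l.1 j l.2 := by
  unfold deltaS0
  rw [show ((litsOf (φ j)).map fun l => (RGX.bind (encVar0 m l.1 j l.2) .eps : RGX Sig)) =
        (((litsOf (φ j)).map fun l => encVar0 m l.1 j l.2).map fun x => RGX.bind x .eps) by
      rw [List.map_map]; rfl]
  have h := seq_disjBind (Sig := Sig) ((litsOf (φ j)).map fun l => encVar0 m l.1 j l.2)
  refine ⟨h.1, ?_⟩
  intro y hy
  have := h.2 y hy
  rw [List.mem_map] at this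
  obtain ⟨l, hl, hx⟩ := this
  exact ⟨l, hl, hx.symm⟩

lemma seq_g2chain {n m : ℕ} {φ : Fin m → Clause3 n} :
    ∀ (J : List (Fin m)), J.Nodup →
      (concatList (J.map fun j => (deltaS0 φ j : RGX Sig))).Sequential ∧
      ∀ y ∈ (concatList (J.map fun j => (deltaS0 φ j : RGX Sig))).vars,
        ∃ j ∈ J, ∃ l ∈ litsOf (φ j), y = encVar0 m l.1 j l.2 := by
  intro J
  induction J with
  | nil =>
      intro _
      exact ⟨trivial, by simp [concatList, RGX.vars]⟩
  | cons j J ih =>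
      intro hnd
      rw [List.nodup_cons] at hnd
      obtain ⟨ihseq, ihvars⟩ := ih hnd.2
      cases J with
      | nil =>
          refine ⟨(seq_delta j).1, ?_⟩
          intro y hy
          have hy' : y ∈ (deltaS0 φ j : RGX Sig).vars := hy
          obtain ⟨l, hl, hx⟩ := (seq_delta j).2 y hy'
          exact ⟨j, List.mem_singleton_self j, l, hl, hx⟩
      | cons j2 J2 =>
          simp only [List.map_cons] at *
          refine ⟨⟨(seq_delta j).1, ihseq, ?_⟩, ?_⟩
          · rw [Finset.disjoint_left]
            intro y hy hy'
            obtain ⟨l, hl, rfl⟩ := (seq_delta j).2 y hy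
            obtain ⟨j', hj', l', hl', hx'⟩ := ihvars _ hy'
            obtain ⟨-, hjj, -⟩ := encVar0_inj j.2 j'.2 hx'
            have hfin : (j : Fin m) = j' := Fin.ext hjj
            rw [← hfin] at hj'
            exact hnd.1 hj' 
          · intro y hy
            rcases Finset.mem_union.mp hy with hy | hy
            · obtain ⟨l, hl, hx⟩ := (seq_delta j).2 y hy
              exact ⟨j, List.mem_cons_self, l, hl, hx⟩
            · obtain ⟨j', hj', l', hl', hx'⟩ := ihvars _ hy
              exact ⟨j', List.mem_cons_of_mem _ hj', l', hl', hx'⟩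

lemma seq_gamma1 (a : Sig) (n m : ℕ) : (gamma1S0 a n m : RGX Sig).Sequential := by
  unfold gamma1S0
  rw [List.ofFn_eq_map]
  exact (seq_g1chain a (List.finRange n) (List.nodup_finRange n)).1

lemma seq_gamma2 (a : Sig) {n m : ℕ} (φ : Fin m → Clause3 n) :
    (gamma2S0 a φ : RGX Sig).Sequential := by
  unfold gamma2S0
  rw [List.ofFn_eq_map]
  have h := seq_g2chain (Sig := Sig) (φ := φ) (List.finRange m) (List.nodup_finRange m)
  generalize hJ : (List.finRange m).map (fun j => (deltaS0 φ j : RGX Sig)) = L at h ⊢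
  cases L with
  | nil => exact trivial
  | cons β L =>
      refine ⟨trivial, h.1, ?_⟩
      show Disjoint (RGX.letter a : RGX Sig).vars (concatList (β :: L)).vars
      simp [RGX.vars]
end Aux4
section Aux5

variable {Sig : Type}

lemma rgxSem_gamma1_elim {a : Sig} {n m : ℕ} {μ : VMapping}
    (h : μ ∈ rgxSem (gamma1S0 a n m) [a]) :
    ∃ b : Fin n → Bool, ∀ (i : Fin n) (j : Fin m),
      μ (encVar0 m i j (b i)) = some (1, 1) := by
  have h' : RMatch (gamma1S0 a n m) [a] 1 2 μ := h
  unfold gamma1S0 at h'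
  rw [List.ofFn_eq_map] at h'
  obtain ⟨-, b, hb⟩ := g1_elim a [a] (List.finRange n) 1 2 μ h'
  exact ⟨b, fun i j => hb i (List.mem_finRange i) j⟩

lemma rgxSem_gamma2_elim {a : Sig} {n m : ℕ} {φ : Fin m → Clause3 n} {μ : VMapping}
    (h : μ ∈ rgxSem (gamma2S0 a φ) [a]) :
    ∀ j : Fin m, ∃ l ∈ litsOf (φ j), μ (encVar0 m l.1 j l.2) = some (2, 2) := by
  have h' : RMatch (gamma2S0 a φ) [a] 1 2 μ := h
  unfold gamma2S0 at h'
  rw [List.ofFn_eq_map] at h'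
  obtain ⟨k, μ1, μ2, h1, h2, hd, hμ⟩ := concatList_cons_elim h'
  have h1' : RMatch (RGX.letter a) [a] 1 k μ1 := h1
  have hk : k = 2 ∧ μ1 = emptyMapping := by
    cases h1' with
    | letter _ _ => exact ⟨rfl, rfl⟩
  obtain ⟨rfl, rfl⟩ := hk
  obtain ⟨-, hrest⟩ := g2_elim [a] (List.finRange m) 2 2 μ2 h2
  subst hμ
  rw [munion_empty_left]
  exact fun j => hrest j (List.mem_finRange j)

lemma rgxSem_gamma1_intro (a : Sig) (n m : ℕ) (b : Fin n → Bool) :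
    mu1Map n m b (List.finRange n) ∈ rgxSem (gamma1S0 a n m) [a] := by
  show RMatch (gamma1S0 a n m) [a] 1 2 _
  unfold gamma1S0
  rw [List.ofFn_eq_map]
  exact g1_intro a b (List.finRange n) (List.nodup_finRange n)

lemma rgxSem_gamma2_intro (a : Sig) {n m : ℕ} (φ : Fin m → Clause3 n)
    (w : Fin m → Fin n × Bool) (hw : ∀ j : Fin m, w j ∈ litsOf (φ j)) :
    mu2Map n m w (List.finRange m) ∈ rgxSem (gamma2S0 a φ) [a] := by
  show RMatch (gamma2S0 a φ) [a] 1 2 _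
  unfold gamma2S0
  rw [List.ofFn_eq_map]
  have hletter : RMatch (RGX.letter a) [a] 1 2 emptyMapping := by
    have := RMatch.letter (d := [a]) (σ := a) (i := 1) (le_refl 1) (by simp)
    simpa using this
  have hrest := g2_intro a w hw (List.finRange m) (List.nodup_finRange m)
  have hdis : DisjointDom emptyMapping (mu2Map n m w (List.finRange m)) :=
    fun x => Or.inl rfl
  have := concatList_cons_intro hletter hrest hdis
  rwa [munion_empty_left] at this

theorem statement0' (a : Sig) (n m : ℕ) (φ : Fin m → Clause3 n) :
    (gamma1S0 a n m).Sequential ∧ (gamma2S0 a φ).Sequential ∧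
    ((joinSet (rgxSem (gamma1S0 a n m) [a]) (rgxSem (gamma2S0 a φ) [a])).Nonempty ↔
      Sat3 φ) := by
  refine ⟨seq_gamma1 a n m, seq_gamma2 a φ, ?_, ?_⟩
  · -- join nonempty → satisfiable
    rintro ⟨μ, μ1, hμ1, μ2, hμ2, hcomp, -⟩
    obtain ⟨b, hb⟩ := rgxSem_gamma1_elim hμ1
    have hδ := rgxSem_gamma2_elim hμ2
    refine ⟨fun i => !(b i), ?_⟩
    intro j
    obtain ⟨l, hl, hv2⟩ := hδ j
    refine ⟨l, hl, ?_⟩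
    by_contra hne
    have hne' : ¬ (!(b l.1)) = l.2 := hne
    have hlb : l.2 = b l.1 := by
      cases hbl : b l.1 <;> cases hl2 : l.2 <;> simp_all
    have hv1 : μ1 (encVar0 m l.1 j l.2) = some (1, 1) := by
      rw [hlb]; exact hb l.1 j
    have h12 : (1 : ℕ) = 2 := congrArg Prod.fst (hcomp _ _ _ hv1 hv2)
    omega
  · -- satisfiable → join nonempty
    rintro ⟨τ, hτ⟩
    choose w hw1 hw2 using hτ
    have hμ1 := rgxSem_gamma1_intro a n m (fun i => !(τ i))
    have hμ2 := rgxSem_gamma2_intro a φ w hw1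
    refine ⟨_, _, hμ1, _, hμ2, ?_, rfl⟩
    intro x s1 s2 h1 h2
    exfalso
    simp only [mu1Map] at h1
    simp only [mu2Map] at h2
    by_cases hq1 : ∃ i ∈ List.finRange n, ∃ j : Fin m, x = encVar0 m i j (!(τ i))
    · by_cases hq2 : ∃ j ∈ List.finRange m, x = encVar0 m (w j).1 j (w j).2
      · obtain ⟨i, -, j, hx1⟩ := hq1
        obtain ⟨j', -, hx2⟩ := hq2
        rw [hx1] at hx2
        obtain ⟨hii, hjj, hbb⟩ := encVar0_inj j.2 j'.2 hx2
        have hi : (i : Fin n) = (w j').1 := Fin.ext hii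
        have hx3 : τ (w j').1 = (w j').2 := hw2 j'
        rw [← hi] at hx3
        rw [← hx3] at hbb
        simp at hbb
      · rw [if_neg hq2] at h2; cases h2
    · rw [if_neg hq1] at h1; cases h1

end Aux5

theorem statement0 (a : Sig) (n m : ℕ) (φ : Fin m → Clause3 n) :
    (gamma1S0 a n m).Sequential ∧ (gamma2S0 a φ).Sequential ∧
    ((joinSet (rgxSem (gamma1S0 a n m) [a]) (rgxSem (gamma2S0 a φ) [a])).Nonempty ↔
      Sat3 φ) := statement0' a n m φ

end Spanners
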